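/- Let E be a row-finite graph. There is a bijection between the set of cycles without exits in E and the set of orbits of minimal periodic elements of M_E^{gr} under the ℤ-action, sending a cycle c to the orbit of (the class of) any vertex on c; moreover, under this bijection the length of the cycle equals the cardinality of the corresponding orbit. -/

import Mathlib

set_option linter.unusedSectionVars false

/-- The algebraic preorder on a commutative monoid: `a ≤ b` iff `b = a + c` for some `c`. -/
def algLE {M : Type*} [AddCommMonoid M] (a b : M) : Prop := ∃ c, b = a + c

/-- A row-finite directed graph: vertices `V`, edges `Ed`, source `s`, range `r`,
and for each vertex the (finite) set of edges it emits. -/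
structure RFGraph (V : Type) (Ed : Type) where
  s : Ed → V
  r : Ed → V
  emit : V → Finset Ed
  mem_emit : ∀ e v, e ∈ emit v ↔ s e = v

namespace RFGraph

variable {V Ed : Type} [DecidableEq V] (G : RFGraph V Ed)

/-- The one-step rewriting relation `→₁` on the free commutative monoid `Multiset V`:
replace one occurrence of a non-sink vertex `v` by the sum of ranges of edges emitted by `v`. -/
def Step1 (a b : Multiset V) : Prop :=
  ∃ v : V, v ∈ a ∧ G.emit v ≠ ∅ ∧ b = a.erase v + (G.emit v).val.map G.r

/-- The reflexive-transitive closure `→` of `→₁`. -/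
def Step : Multiset V → Multiset V → Prop := Relation.ReflTransGen G.Step1

/-- The congruence on the free commutative monoid generated by `→₁`. -/
def gcon : AddCon (Multiset V) := addConGen G.Step1

/-- The graph monoid `M_E`. -/
def GM := G.gcon.Quotient

instance : AddCommMonoid G.GM := inferInstanceAs (AddCommMonoid G.gcon.Quotient)

/-- One-step rewriting for the talented monoid: replace `v(i)` by `Σ_{e ∈ s⁻¹(v)} r(e)(i+1)`. -/
def TStep1 (a b : Multiset (V × ℤ)) : Prop :=
  ∃ (v : V) (i : ℤ), (v, i) ∈ a ∧ G.emit v ≠ ∅ ∧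
    b = a.erase (v, i) + (G.emit v).val.map (fun e => (G.r e, i + 1))

/-- The congruence generated by the talented one-step relation. -/
def tcon : AddCon (Multiset (V × ℤ)) := addConGen G.TStep1

/-- The talented monoid `M_E^{gr}`. -/
def TM := G.tcon.Quotient

instance : AddCommMonoid G.TM := inferInstanceAs (AddCommMonoid G.tcon.Quotient)

/-- The generator `v(i)` of the talented monoid. -/
def tgen (v : V) (i : ℤ) : G.TM := G.tcon.mk' {(v, i)}

/-- The shift `v(i) ↦ v(i+n)` on the free commutative monoid `Multiset (V × ℤ)`. -/
def shiftMul (n : ℤ) : Multiset (V × ℤ) →+ Multiset (V × ℤ) where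
  toFun a := a.map fun p => (p.1, p.2 + n)
  map_zero' := rfl
  map_add' a b := Multiset.map_add (fun p => (p.1, p.2 + n)) a b

lemma shift_inj (n : ℤ) : Function.Injective (fun p : V × ℤ => (p.1, p.2 + n)) := by
  rintro ⟨a, b⟩ ⟨c, d⟩ h
  simp only [Prod.mk.injEq] at h
  exact Prod.ext h.1 (by omega)

lemma tstep1_shift (n : ℤ) {a b : Multiset (V × ℤ)} (h : G.TStep1 a b) :
    G.TStep1 (shiftMul n a) (shiftMul n b) := by
  obtain ⟨v, i, hv, hne, rfl⟩ := h
  refine ⟨v, i + n, Multiset.mem_map.2 ⟨(v, i), hv, rfl⟩, hne, ?_⟩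
  show Multiset.map _ _ = _
  rw [Multiset.map_add]
  congr 1
  · exact (Multiset.map_erase _ (shift_inj n) (v, i) a)
  · rw [Multiset.map_map]
    congr 1
    funext e
    simp only [Function.comp_apply]
    congr 1
    omega

lemma tcon_shift (n : ℤ) {a b : Multiset (V × ℤ)} (h : G.tcon a b) :
    G.tcon (shiftMul n a) (shiftMul n b) := by
  have hle : addConGen G.TStep1 ≤
      { r := fun a b => G.tcon (shiftMul n a) (shiftMul n b)
        iseqv := ⟨fun _ => G.tcon.refl _, fun h => G.tcon.symm h,
          fun h₁ h₂ => G.tcon.trans h₁ h₂⟩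
        add' := fun h₁ h₂ => by
          simpa only [map_add] using G.tcon.add h₁ h₂ } := by
    refine AddCon.addConGen_le.2 fun x y hxy => ?_
    exact AddConGen.Rel.of _ _ (G.tstep1_shift n hxy)
  exact hle h

/-- The `ℤ`-action on the talented monoid, `ⁿ(v(i)) = v(i+n)`. -/
def tshift (n : ℤ) : G.TM →+ G.TM :=
  G.tcon.lift (G.tcon.mk'.comp (shiftMul n)) (by
    intro a b h
    show G.tcon.mk' (shiftMul n a) = G.tcon.mk' (shiftMul n b)
    exact (AddCon.eq _).2 (G.tcon_shift n h))

/-- Reachability: there is a (possibly trivial) path from `u` to `v`. -/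
def Reaches (u v : V) : Prop :=
  Relation.ReflTransGen (fun a b => ∃ e : Ed, G.s e = a ∧ G.r e = b) u v

/-- A cycle: a nonempty path of edges, closed up, with distinct source vertices. -/
def IsCycle (p : List Ed) : Prop :=
  ∃ h : p ≠ [], List.Chain' (fun e f => G.r e = G.s f) p ∧
    G.r (p.getLast h) = G.s (p.head h) ∧ (p.map G.s).Nodup

/-- The cycle `p` has an exit: some vertex on it emits an edge not on the cycle. -/
def HasExit (p : List Ed) : Prop :=
  ∃ e : Ed, (∃ f ∈ p, G.s e = G.s f) ∧ e ∉ p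

/-- The cycle `p` has no exit: every vertex on it emits exactly its cycle edge. -/
def NoExit (p : List Ed) : Prop :=
  ∀ e ∈ p, G.emit (G.s e) = {e}

/-- `ℤ`-order-ideals of the talented monoid. -/
def IsOrderIdeal (I : Set G.TM) : Prop :=
  (0 : G.TM) ∈ I ∧ (∀ a b : G.TM, a ∈ I → b ∈ I → a + b ∈ I) ∧
    (∀ (n : ℤ) (a : G.TM), a ∈ I → G.tshift n a ∈ I) ∧
    (∀ a b : G.TM, algLE a b → b ∈ I → a ∈ I)

/-- The smallest `ℤ`-order-ideal of `M_E^{gr}` containing `v(0)`. -/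
def genIdeal (v : V) : Set G.TM :=
  ⋂₀ {I : Set G.TM | G.IsOrderIdeal I ∧ G.tgen v 0 ∈ I}

/-- Minimality in the talented monoid: `0 ≠ b ≤ a` implies `a ≤ b`. -/
def TMin (a : G.TM) : Prop := ∀ b : G.TM, b ≠ 0 → algLE b a → algLE a b

/-- The covering graph `\bar E`. -/
def cover : RFGraph (V × ℤ) (Ed × ℤ) where
  s p := (G.s p.1, p.2)
  r p := (G.r p.1, p.2 + 1)
  emit p := (G.emit p.1).map ⟨fun e => (e, p.2), fun a b h => by
    simpa using congrArg Prod.fst h⟩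
  mem_emit := by
    rintro ⟨e, n⟩ ⟨v, m⟩
    simp only [Finset.mem_map, Function.Embedding.coeFn_mk, Prod.mk.injEq, G.mem_emit]
    constructor
    · rintro ⟨a, ha, rfl, rfl⟩; exact ⟨ha, rfl⟩
    · rintro ⟨rfl, rfl⟩
      first | exact ⟨e, rfl, rfl, rfl⟩ | exact ⟨e, rfl, rfl⟩ | exact ⟨e, by simp⟩ | simp

/-- The set of vertices on a cycle. -/
def cycVerts (p : List Ed) : Set V := {v | ∃ e ∈ p, G.s e = v}

/-! ### Auxiliary infrastructure for the main theorem -/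

/-- Reflexive-transitive closure of the talented one-step rewriting. -/
def TRT : Multiset (V × ℤ) → Multiset (V × ℤ) → Prop := Relation.ReflTransGen G.TStep1

lemma tstep1_add_left {a b : Multiset (V × ℤ)} (c : Multiset (V × ℤ)) (h : G.TStep1 a b) :
    G.TStep1 (c + a) (c + b) := by
  obtain ⟨v, i, hv, hne, rfl⟩ := h
  exact ⟨v, i, Multiset.mem_add.2 (Or.inr hv), hne, by
    rw [Multiset.erase_add_right_pos _ hv, add_assoc]⟩

lemma tstep1_add_right {a b : Multiset (V × ℤ)} (c : Multiset (V × ℤ)) (h : G.TStep1 a b) :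
    G.TStep1 (a + c) (b + c) := by
  rw [add_comm a c, add_comm b c]; exact G.tstep1_add_left c h

lemma trt_add_left {a b : Multiset (V × ℤ)} (c : Multiset (V × ℤ)) (h : G.TRT a b) :
    G.TRT (c + a) (c + b) :=
  Relation.ReflTransGen.lift (c + ·) (fun _ _ h => G.tstep1_add_left c h) _ _ h

lemma trt_add {a b c d : Multiset (V × ℤ)} (h1 : G.TRT a b) (h2 : G.TRT c d) :
    G.TRT (a + c) (b + d) := by
  refine Relation.ReflTransGen.trans ?_ (G.trt_add_left b h2)
  rw [add_comm a c, add_comm b c]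
  exact G.trt_add_left c h1

lemma tstep1_diamond {a b c : Multiset (V × ℤ)} (hab : G.TStep1 a b) (hac : G.TStep1 a c) :
    b = c ∨ ∃ d, G.TStep1 b d ∧ G.TStep1 c d := by
  obtain ⟨v, i, hv, hvne, rfl⟩ := hab
  obtain ⟨w, j, hw, hwne, rfl⟩ := hac
  by_cases hvw : (v, i) = (w, j)
  · left
    injection hvw with h1 h2
    subst h1; subst h2
    rfl
  · right
    have hw' : (w, j) ∈ a.erase (v, i) :=
      (Multiset.mem_erase_of_ne (fun h => hvw h.symm)).2 hw
    have hv' : (v, i) ∈ a.erase (w, j) := (Multiset.mem_erase_of_ne hvw).2 hv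
    refine ⟨(a.erase (v, i) + (G.emit v).val.map (fun e => (G.r e, i + 1))).erase (w, j)
        + (G.emit w).val.map (fun e => (G.r e, j + 1)),
      ⟨w, j, Multiset.mem_add.2 (Or.inl hw'), hwne, rfl⟩,
      ⟨v, i, Multiset.mem_add.2 (Or.inl hv'), hvne, ?_⟩⟩
    rw [Multiset.erase_add_left_pos _ hw', Multiset.erase_add_left_pos _ hv',
      Multiset.erase_comm, add_right_comm]

lemma trt_join {a b c : Multiset (V × ℤ)} (hab : G.TRT a b) (hac : G.TRT a c) :
    ∃ d, G.TRT b d ∧ G.TRT c d :=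
  Relation.church_rosser (fun _ y _ hxy hxz => by
    rcases G.tstep1_diamond hxy hxz with rfl | ⟨d, h1, h2⟩
    · exact ⟨y, Relation.ReflGen.refl, Relation.ReflTransGen.refl⟩
    · exact ⟨d, Relation.ReflGen.single h1, Relation.ReflTransGen.single h2⟩) hab hac

lemma trt_tcon {a b : Multiset (V × ℤ)} (h : G.TRT a b) : G.tcon a b := by
  induction h with
  | refl => exact G.tcon.refl _
  | tail _ h2 ih => exact G.tcon.trans ih (AddConGen.Rel.of _ _ h2)

/-- Joinability as an additive congruence. -/
def joinCon : AddCon (Multiset (V × ℤ)) where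
  r x y := ∃ d, G.TRT x d ∧ G.TRT y d
  iseqv := by
    refine ⟨fun x => ⟨x, Relation.ReflTransGen.refl, Relation.ReflTransGen.refl⟩, ?_, ?_⟩
    · rintro x y ⟨d, h1, h2⟩
      exact ⟨d, h2, h1⟩
    · rintro x y z ⟨d, h1, h2⟩ ⟨e, h3, h4⟩
      obtain ⟨f, hf1, hf2⟩ := G.trt_join h2 h3
      exact ⟨f, h1.trans hf1, h4.trans hf2⟩
  add' := by
    rintro a b c d ⟨x, h1, h2⟩ ⟨y, h3, h4⟩
    exact ⟨x + y, G.trt_add h1 h3, G.trt_add h2 h4⟩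

lemma tcon_iff_join {a b : Multiset (V × ℤ)} :
    G.tcon a b ↔ ∃ d, G.TRT a d ∧ G.TRT b d := by
  constructor
  · intro h
    have hle : addConGen G.TStep1 ≤ G.joinCon :=
      AddCon.addConGen_le.2 fun x y hxy => ⟨y, Relation.ReflTransGen.single hxy,
        Relation.ReflTransGen.refl⟩
    exact hle h
  · rintro ⟨d, h1, h2⟩
    exact (G.trt_tcon h1).trans (G.trt_tcon h2).symm

lemma tstep1_split {X Y Z : Multiset (V × ℤ)} (h : G.TStep1 (X + Y) Z) :
    (∃ X', G.TStep1 X X' ∧ Z = X' + Y) ∨ (∃ Y', G.TStep1 Y Y' ∧ Z = X + Y') := by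
  obtain ⟨v, i, hv, hne, rfl⟩ := h
  rcases Multiset.mem_add.1 hv with h | h
  · exact Or.inl ⟨X.erase (v, i) + (G.emit v).val.map (fun e => (G.r e, i + 1)),
      ⟨v, i, h, hne, rfl⟩, by rw [Multiset.erase_add_left_pos _ h, add_right_comm]⟩
  · exact Or.inr ⟨Y.erase (v, i) + (G.emit v).val.map (fun e => (G.r e, i + 1)),
      ⟨v, i, h, hne, rfl⟩, by rw [Multiset.erase_add_right_pos _ h, add_assoc]⟩

lemma trt_split {A B Z : Multiset (V × ℤ)} (h : G.TRT (A + B) Z) :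
    ∃ ZA ZB, Z = ZA + ZB ∧ G.TRT A ZA ∧ G.TRT B ZB := by
  induction h with
  | refl => exact ⟨A, B, rfl, Relation.ReflTransGen.refl, Relation.ReflTransGen.refl⟩
  | tail _ h2 ih =>
    obtain ⟨ZA, ZB, rfl, hA, hB⟩ := ih
    rcases G.tstep1_split h2 with ⟨X', hs, rfl⟩ | ⟨Y', hs, rfl⟩
    · exact ⟨X', ZB, rfl, hA.tail hs, hB⟩
    · exact ⟨ZA, Y', rfl, hA, hB.tail hs⟩

lemma tstep1_card_le {a b : Multiset (V × ℤ)} (h : G.TStep1 a b) :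
    Multiset.card a ≤ Multiset.card b := by
  obtain ⟨v, i, hv, hne, rfl⟩ := h
  rw [Multiset.card_add, Multiset.card_map, Multiset.card_erase_of_mem hv]
  have h1 : 1 ≤ (G.emit v).val.card :=
    Finset.card_pos.2 (Finset.nonempty_iff_ne_empty.2 hne)
  have h2 : 1 ≤ Multiset.card a := Multiset.card_pos_iff_exists_mem.2 ⟨_, hv⟩
  have h3 : (Multiset.card a).pred = Multiset.card a - 1 := Nat.pred_eq_sub_one
  omega

lemma trt_card_le {a b : Multiset (V × ℤ)} (h : G.TRT a b) :
    Multiset.card a ≤ Multiset.card b := by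
  induction h with
  | refl => exact le_rfl
  | tail _ h2 ih => exact le_trans ih (G.tstep1_card_le h2)

lemma trt_zero_right {a : Multiset (V × ℤ)} (h : G.TRT a 0) : a = 0 := by
  have := G.trt_card_le h
  simp only [Multiset.card_zero, Nat.le_zero, Multiset.card_eq_zero] at this
  exact this

lemma mk_eq_iff {A B : Multiset (V × ℤ)} : G.tcon.mk' A = G.tcon.mk' B ↔ G.tcon A B :=
  AddCon.eq _

lemma trt_mk_eq {A B : Multiset (V × ℤ)} (h : G.TRT A B) : G.tcon.mk' A = G.tcon.mk' B :=
  G.mk_eq_iff.2 (G.trt_tcon h)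

lemma mk_eq_zero_iff {A : Multiset (V × ℤ)} : G.tcon.mk' A = 0 ↔ A = 0 := by
  constructor
  · intro h
    have h0 : G.tcon.mk' A = G.tcon.mk' 0 := by rw [h, map_zero]
    obtain ⟨d, h1, h2⟩ := G.tcon_iff_join.1 (G.mk_eq_iff.1 h0)
    have : d = 0 := by
      clear h1
      induction h2 with
      | refl => rfl
      | tail _ h2 ih =>
        subst ih
        obtain ⟨v, i, hv, _, _⟩ := h2
        exact absurd hv (Multiset.notMem_zero _)
    exact G.trt_zero_right (this ▸ h1)
  · rintro rfl; exact map_zero _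

lemma exists_rep (x : G.TM) : ∃ A : Multiset (V × ℤ), G.tcon.mk' A = x :=
  AddCon.mk'_surjective x

lemma tgen_ne_zero (v : V) (i : ℤ) : G.tgen v i ≠ 0 := by
  intro h
  have := G.mk_eq_zero_iff.1 h
  exact Multiset.singleton_ne_zero _ this

lemma tshift_mk (n : ℤ) (A : Multiset (V × ℤ)) :
    G.tshift n (G.tcon.mk' A) = G.tcon.mk' (shiftMul n A) :=
  AddCon.lift_mk' _ _

lemma tshift_tgen (n : ℤ) (v : V) (i : ℤ) :
    G.tshift n (G.tgen v i) = G.tgen v (i + n) := by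
  rw [tgen, G.tshift_mk]
  congr 1
  all_goals simp

lemma tshift_zero_apply (x : G.TM) : G.tshift 0 x = x := by
  obtain ⟨A, rfl⟩ := G.exists_rep x
  rw [G.tshift_mk]
  congr 1
  show Multiset.map _ A = A
  rw [show (fun p : V × ℤ => (p.1, p.2 + (0:ℤ))) = id by funext p; simp, Multiset.map_id]

lemma tshift_tshift (m n : ℤ) (x : G.TM) :
    G.tshift m (G.tshift n x) = G.tshift (n + m) x := by
  obtain ⟨A, rfl⟩ := G.exists_rep x
  rw [G.tshift_mk, G.tshift_mk, G.tshift_mk]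
  congr 1
  show Multiset.map _ (Multiset.map _ A) = Multiset.map _ A
  rw [Multiset.map_map]
  congr 1
  funext p
  simp [add_assoc]

lemma trt_shift (n : ℤ) {a b : Multiset (V × ℤ)} (h : G.TRT a b) :
    G.TRT (shiftMul n a) (shiftMul n b) :=
  Relation.ReflTransGen.lift (shiftMul n) (fun _ _ h => G.tstep1_shift n h) _ _ h

/-- Number of paths of length `k` starting at `v`. -/
def Pn (G : RFGraph V Ed) : ℕ → V → ℕ
  | 0, _ => 1
  | (k+1), v => ((G.emit v).val.map fun e => G.Pn k (G.r e)).sum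

/-- Level-capped path-counting weight. -/
def cw (m : ℤ) (A : Multiset (V × ℤ)) : ℕ :=
  (A.map fun q => if q.2 ≤ m then G.Pn (m - q.2).toNat q.1 else 0).sum

lemma cw_add (m : ℤ) (A B : Multiset (V × ℤ)) :
    G.cw m (A + B) = G.cw m A + G.cw m B := by
  simp [cw, Multiset.map_add]

lemma cw_singleton (m : ℤ) (v : V) (i : ℤ) :
    G.cw m ({(v, i)} : Multiset (V × ℤ)) = if i ≤ m then G.Pn (m - i).toNat v else 0 := by
  simp [cw]

lemma tstep1_level_back {m : ℤ} {a b : Multiset (V × ℤ)} (h : G.TStep1 a b)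
    (hb : ∀ q ∈ b, q.2 ≤ m) : ∀ q ∈ a, q.2 ≤ m := by
  obtain ⟨v, i, hv, hne, rfl⟩ := h
  intro q hq
  by_cases hqv : q = (v, i)
  · subst hqv
    obtain ⟨e, he⟩ := Finset.nonempty_iff_ne_empty.2 hne
    have hchild : (G.r e, i + 1) ∈ a.erase (v, i) + (G.emit v).val.map
        (fun e => (G.r e, i + 1)) :=
      Multiset.mem_add.2 (Or.inr (Multiset.mem_map.2 ⟨e, Finset.mem_def.1 he, rfl⟩))
    have h2 : i + 1 ≤ m := hb _ hchild
    show i ≤ m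
    omega
  · exact hb q (Multiset.mem_add.2 (Or.inl ((Multiset.mem_erase_of_ne hqv).2 hq)))

lemma tstep1_cw {m : ℤ} {a b : Multiset (V × ℤ)} (h : G.TStep1 a b)
    (hb : ∀ q ∈ b, q.2 ≤ m) : G.cw m a = G.cw m b := by
  obtain ⟨v, i, hv, hne, rfl⟩ := h
  have hi1 : i + 1 ≤ m := by
    obtain ⟨e, he⟩ := Finset.nonempty_iff_ne_empty.2 hne
    exact hb (G.r e, i + 1)
      (Multiset.mem_add.2 (Or.inr (Multiset.mem_map.2 ⟨e, Finset.mem_def.1 he, rfl⟩)))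
  have ha : a = (v, i) ::ₘ a.erase (v, i) := (Multiset.cons_erase hv).symm
  calc G.cw m a = G.cw m ({(v, i)} + a.erase (v, i)) := by
        rw [Multiset.singleton_add, ← ha]
    _ = G.cw m ({(v, i)} : Multiset (V × ℤ)) + G.cw m (a.erase (v, i)) := G.cw_add _ _ _
    _ = G.cw m ((G.emit v).val.map fun e => (G.r e, i + 1)) + G.cw m (a.erase (v, i)) := by
        congr 1
        rw [G.cw_singleton, if_pos (by omega)]
        show _ = Multiset.sum _
        rw [Multiset.map_map]
        have htn : (m - i).toNat = (m - (i + 1)).toNat + 1 := by omega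
        rw [htn]
        show G.Pn _ v = _
        rw [Pn]
        congr 1
        apply Multiset.map_congr rfl
        intro e _
        simp only [Function.comp_apply]
        rw [if_pos hi1]
    _ = G.cw m (a.erase (v, i) + (G.emit v).val.map fun e => (G.r e, i + 1)) := by
        rw [G.cw_add, add_comm]

lemma trt_cw {m : ℤ} {A B : Multiset (V × ℤ)} (h : G.TRT A B)
    (hb : ∀ q ∈ B, q.2 ≤ m) : G.cw m A = G.cw m B ∧ ∀ q ∈ A, q.2 ≤ m := by
  induction h with
  | refl => exact ⟨rfl, hb⟩
  | tail h1 h2 ih =>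
    have hmid := G.tstep1_level_back h2 hb
    obtain ⟨hcw, hA⟩ := ih hmid
    exact ⟨hcw.trans (G.tstep1_cw h2 hb), hA⟩

lemma exists_level_bound (A : Multiset (V × ℤ)) : ∃ m : ℤ, ∀ q ∈ A, q.2 ≤ m := by
  induction A using Multiset.induction with
  | empty => exact ⟨0, by simp⟩
  | cons a s ih =>
    obtain ⟨m, hm⟩ := ih
    refine ⟨max m a.2, ?_⟩
    intro q hq
    rcases Multiset.mem_cons.1 hq with rfl | hq
    · exact le_max_right _ _
    · exact le_trans (hm q hq) (le_max_left _ _)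

lemma Pn_pos {v : V} (h : ∀ x, G.Reaches v x → G.emit x ≠ ∅) (k : ℕ) : 1 ≤ G.Pn k v := by
  induction k generalizing v with
  | zero => exact le_rfl
  | succ k ih =>
    obtain ⟨e, he⟩ := Finset.nonempty_iff_ne_empty.2 (h v Relation.ReflTransGen.refl)
    have hmem : G.Pn k (G.r e) ∈ (G.emit v).val.map fun e => G.Pn k (G.r e) :=
      Multiset.mem_map.2 ⟨e, Finset.mem_def.1 he, rfl⟩
    calc 1 ≤ G.Pn k (G.r e) := ih (fun x hx => h x
          (Relation.ReflTransGen.head ⟨e, (G.mem_emit e v).1 he, rfl⟩ hx))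
    _ ≤ _ := Multiset.single_le_sum (fun x _ => Nat.zero_le x) _ hmem

lemma trt_of_reaches {v x : V} (i : ℤ) (h : G.Reaches v x) :
    ∃ F, G.TRT {(v, i)} F ∧ ∃ t : ℕ, (x, i + t) ∈ F := by
  induction h with
  | refl => exact ⟨{(v, i)}, Relation.ReflTransGen.refl, 0, by simp⟩
  | tail _ h2 ih =>
    obtain ⟨F, hF, t, htF⟩ := ih
    obtain ⟨e, hse, hre⟩ := h2
    have hee : e ∈ G.emit _ := (G.mem_emit e _).2 hse
    have hne : G.emit _ ≠ ∅ := Finset.ne_empty_of_mem hee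
    refine ⟨F.erase (_, i + t) + (G.emit _).val.map (fun e => (G.r e, (i + t) + 1)),
      hF.tail ⟨_, i + t, htF, hne, rfl⟩, t + 1, Multiset.mem_add.2 (Or.inr ?_)⟩
    refine Multiset.mem_map.2 ⟨e, Finset.mem_def.1 hee, ?_⟩
    rw [hre]
    congr 1
    push_cast
    ring

lemma trt_elem_ctx {A D : Multiset (V × ℤ)} (hAD : G.TRT A D) {q : V × ℤ} (hq : q ∈ D)
    {F : Multiset (V × ℤ)} (hF : G.TRT {q} F) : G.TRT A (D.erase q + F) := by
  have hD : D = {q} + D.erase q := by rw [Multiset.singleton_add, Multiset.cons_erase hq]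
  have key : G.TRT D (F + D.erase q) := by
    nth_rewrite 1 [hD]
    exact G.trt_add hF Relation.ReflTransGen.refl
  rw [add_comm F (D.erase q)] at key
  exact hAD.trans key

/-- The unique successor of a vertex emitting exactly one edge. -/
noncomputable def succ (G : RFGraph V Ed) (v : V) : V :=
  letI := Classical.propDecidable (∃ e, G.emit v = {e})
  if h : ∃ e, G.emit v = {e} then G.r h.choose else v

lemma succ_eq {v : V} {e : Ed} (h : G.emit v = {e}) : G.succ v = G.r e := by
  have hex : ∃ e, G.emit v = {e} := ⟨e, h⟩
  have h2 : hex.choose = e :=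
    Finset.singleton_injective (hex.choose_spec.symm.trans h)
  rw [succ]
  rw [dif_pos hex, h2]

lemma tstep1_uniq {v : V} {e : Ed} (h : G.emit v = {e}) (i : ℤ) :
    G.TStep1 {(v, i)} {(G.succ v, i + 1)} := by
  refine ⟨v, i, Multiset.mem_singleton_self _, by rw [h]; simp, ?_⟩
  rw [Multiset.erase_singleton, h, G.succ_eq h]
  simp

lemma trt_iterate {v : V} (hit : ∀ t : ℕ, ∃ e, G.emit ((G.succ)^[t] v) = {e}) (i : ℤ) (t : ℕ) :
    G.TRT {(v, i)} {((G.succ)^[t] v, i + t)} := by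
  induction t with
  | zero =>
    simp only [Function.iterate_zero, id_eq, Nat.cast_zero, add_zero]
    exact Relation.ReflTransGen.refl
  | succ t ih =>
    obtain ⟨e, he⟩ := hit t
    refine ih.tail ?_
    have := G.tstep1_uniq he (i + t)
    rw [Function.iterate_succ_apply']
    convert this using 2
    push_cast
    ring

lemma trt_singleton_eq {v : V} (hit : ∀ t : ℕ, ∃ e, G.emit ((G.succ)^[t] v) = {e}) (i : ℤ)
    {F : Multiset (V × ℤ)} (h : G.TRT {(v, i)} F) :
    ∃ t : ℕ, F = {((G.succ)^[t] v, i + t)} := by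
  induction h with
  | refl => exact ⟨0, by simp⟩
  | tail _ h2 ih =>
    obtain ⟨t, rfl⟩ := ih
    obtain ⟨w, j, hw, hne, rfl⟩ := h2
    have hw' : w = (G.succ)^[t] v ∧ j = i + t := by
      have := Multiset.mem_singleton.1 hw
      exact ⟨congrArg Prod.fst this, congrArg Prod.snd this⟩
    obtain ⟨rfl, rfl⟩ := hw'
    obtain ⟨e, he⟩ := hit t
    refine ⟨t + 1, ?_⟩
    rw [Multiset.erase_singleton, he, Function.iterate_succ_apply', G.succ_eq he]
    push_cast
    simp [add_assoc]

lemma orbit_shift (m : ℤ) (x : G.TM) :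
    (Set.range fun n : ℤ => G.tshift n (G.tshift m x)) = Set.range fun n : ℤ => G.tshift n x := by
  ext y
  constructor
  · rintro ⟨n, rfl⟩
    exact ⟨m + n, (G.tshift_tshift n m x).symm⟩
  · rintro ⟨n, rfl⟩
    refine ⟨n - m, ?_⟩
    show G.tshift (n - m) (G.tshift m x) = G.tshift n x
    rw [G.tshift_tshift]
    congr 1
    ring

lemma nat_mod_succ (k ℓ : ℕ) (hℓ : 0 < ℓ) :
    (k + 1) % ℓ = if k % ℓ + 1 = ℓ then 0 else k % ℓ + 1 := by
  have h1 : (k + 1) % ℓ = (k % ℓ + 1) % ℓ := by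
    conv_lhs => rw [← Nat.mod_add_div k ℓ]
    rw [add_right_comm]
    exact Nat.add_mul_mod_self_left _ _ _
  rw [h1]
  split
  · next h => rw [h, Nat.mod_self]
  · next h => exact Nat.mod_eq_of_lt (by have := Nat.mod_lt k hℓ; omega)

lemma cycle_machine (p : List Ed) (hc : G.IsCycle p) (hx : G.NoExit p) :
    ∃ (w : ℕ → V) (ed : ℕ → Ed),
      (∀ k, G.emit (w k) = {ed k}) ∧ (∀ k, G.r (ed k) = w (k + 1)) ∧
      (∀ k, w (k + p.length) = w k) ∧
      (∀ k k', k < p.length → k' < p.length → w k = w k' → k = k') ∧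
      (∀ x, x ∈ G.cycVerts p ↔ ∃ k, k < p.length ∧ w k = x) := by
  obtain ⟨hne, hch, hlast, hnd⟩ := hc
  have hℓ : 0 < p.length := List.length_pos_iff.2 hne
  refine ⟨fun k => G.s (p.get ⟨k % p.length, Nat.mod_lt _ hℓ⟩),
    fun k => p.get ⟨k % p.length, Nat.mod_lt _ hℓ⟩, ?_, ?_, ?_, ?_, ?_⟩
  · intro k
    exact hx _ (List.get_mem p _)
  · intro k
    show G.r (p.get ⟨k % p.length, Nat.mod_lt _ hℓ⟩)
        = G.s (p.get ⟨(k + 1) % p.length, Nat.mod_lt _ hℓ⟩)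
    rcases eq_or_ne (k % p.length + 1) p.length with h | h
    · have h0 : (k + 1) % p.length = 0 := by rw [nat_mod_succ _ _ hℓ, if_pos h]
      have hmlt := Nat.mod_lt k hℓ
      have hl1 : k % p.length = p.length - 1 := by omega
      have hf1 : (⟨k % p.length, Nat.mod_lt _ hℓ⟩ : Fin p.length)
          = ⟨p.length - 1, by omega⟩ := Fin.ext hl1
      have hf2 : (⟨(k + 1) % p.length, Nat.mod_lt _ hℓ⟩ : Fin p.length)
          = ⟨0, hℓ⟩ := Fin.ext h0
      rw [hf1, hf2]
      have hgl : p.getLast hne = p.get ⟨p.length - 1, by omega⟩ := List.getLast_eq_getElem hne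
      have hhd : p.head hne = p.get ⟨0, hℓ⟩ := by
        rw [List.head_eq_getElem, List.get_eq_getElem]
      rw [hgl, hhd] at hlast
      exact hlast
    · have hmlt := Nat.mod_lt k hℓ
      have hlt : k % p.length < p.length - 1 := by omega
      have h1 : (k + 1) % p.length = k % p.length + 1 := by
        rw [nat_mod_succ _ _ hℓ, if_neg h]
      have hf2 : (⟨(k + 1) % p.length, Nat.mod_lt _ hℓ⟩ : Fin p.length)
          = ⟨k % p.length + 1, by omega⟩ := Fin.ext h1
      rw [hf2]
      exact List.isChain_iff_getElem.1 hch (k % p.length) (by omega)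
  · intro k
    have : (k + p.length) % p.length = k % p.length := Nat.add_mod_right _ _
    exact congrArg (fun j => G.s (p.get j)) (Fin.ext this)
  · intro k k' hk hk' hww
    have hmk : k % p.length = k := Nat.mod_eq_of_lt hk
    have hmk' : k' % p.length = k' := Nat.mod_eq_of_lt hk'
    have hww0 : G.s (p.get ⟨k % p.length, Nat.mod_lt _ hℓ⟩)
        = G.s (p.get ⟨k' % p.length, Nat.mod_lt _ hℓ⟩) := hww
    have e1 : (⟨k % p.length, Nat.mod_lt _ hℓ⟩ : Fin p.length) = ⟨k, hk⟩ := Fin.ext hmk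
    have e2 : (⟨k' % p.length, Nat.mod_lt _ hℓ⟩ : Fin p.length) = ⟨k', hk'⟩ := Fin.ext hmk'
    rw [e1, e2] at hww0
    have hww' : (p.map G.s).get ⟨k, by simpa using hk⟩
        = (p.map G.s).get ⟨k', by simpa using hk'⟩ := by
      simp only [List.get_eq_getElem, List.getElem_map]
      exact hww0
    have h5 := List.nodup_iff_injective_get.1 hnd hww'
    exact congrArg Fin.val h5
  · intro x
    constructor
    · rintro ⟨e, he, rfl⟩
      obtain ⟨⟨j, hj⟩, rfl⟩ := List.mem_iff_get.1 he
      refine ⟨j, hj, ?_⟩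
      exact congrArg (fun i => G.s (p.get i)) (Fin.ext (Nat.mod_eq_of_lt hj))
    · rintro ⟨k, hk, rfl⟩
      exact ⟨p.get ⟨k % p.length, Nat.mod_lt _ hℓ⟩, List.get_mem p _, rfl⟩

section machine

variable {G}
variable (w : ℕ → V) (ed : ℕ → Ed) (ℓ : ℕ)

lemma w_succ (hemit : ∀ k, G.emit (w k) = {ed k}) (hr : ∀ k, G.r (ed k) = w (k + 1)) (k : ℕ) :
    G.succ (w k) = w (k + 1) := by
  rw [G.succ_eq (hemit k)]; exact hr k

lemma w_iter (hemit : ∀ k, G.emit (w k) = {ed k}) (hr : ∀ k, G.r (ed k) = w (k + 1)) (k t : ℕ) :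
    (G.succ)^[t] (w k) = w (k + t) := by
  induction t with
  | zero => rfl
  | succ t ih =>
    rw [Function.iterate_succ_apply', ih, w_succ w ed hemit hr, ← add_assoc]

lemma w_hit (hemit : ∀ k, G.emit (w k) = {ed k}) (hr : ∀ k, G.r (ed k) = w (k + 1)) (k : ℕ) :
    ∀ t : ℕ, ∃ e, G.emit ((G.succ)^[t] (w k)) = {e} :=
  fun t => ⟨ed (k + t), by rw [w_iter w ed hemit hr]; exact hemit _⟩

lemma w_tgen_eq (hemit : ∀ k, G.emit (w k) = {ed k}) (hr : ∀ k, G.r (ed k) = w (k + 1))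
    (k t : ℕ) (i : ℤ) : G.tgen (w k) i = G.tgen (w (k + t)) (i + t) := by
  have h := G.trt_mk_eq (G.trt_iterate (w_hit w ed hemit hr k) i t)
  rw [w_iter w ed hemit hr] at h
  exact h

lemma w_reach (hemit : ∀ k, G.emit (w k) = {ed k}) (hr : ∀ k, G.r (ed k) = w (k + 1))
    (k : ℕ) (i : ℤ) {F : Multiset (V × ℤ)} (h : G.TRT {(w k, i)} F) :
    ∃ t : ℕ, F = {(w (k + t), i + t)} := by
  obtain ⟨t, rfl⟩ := G.trt_singleton_eq (w_hit w ed hemit hr k) i h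
  exact ⟨t, by rw [w_iter w ed hemit hr]⟩

lemma w_mul (hper : ∀ k, w (k + ℓ) = w k) (k t : ℕ) : w (k + ℓ * t) = w k := by
  induction t with
  | zero => rfl
  | succ t ih =>
    have : k + ℓ * (t + 1) = (k + ℓ * t) + ℓ := by ring
    rw [this, hper, ih]

lemma w_mod (hℓ : 0 < ℓ) (hper : ∀ k, w (k + ℓ) = w k) (k : ℕ) : w k = w (k % ℓ) := by
  conv_lhs => rw [← Nat.mod_add_div k ℓ]
  exact w_mul w ℓ hper (k % ℓ) (k / ℓ)

lemma w_eq_mod (hℓ : 0 < ℓ) (hper : ∀ k, w (k + ℓ) = w k)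
    (hinj : ∀ k k', k < ℓ → k' < ℓ → w k = w k' → k = k') {m m' : ℕ} (h : w m = w m') :
    m % ℓ = m' % ℓ := by
  rw [w_mod w ℓ hℓ hper m, w_mod w ℓ hℓ hper m'] at h
  exact hinj _ _ (Nat.mod_lt _ hℓ) (Nat.mod_lt _ hℓ) h

lemma w_tgen_dvd (hℓ : 0 < ℓ) (hemit : ∀ k, G.emit (w k) = {ed k})
    (hr : ∀ k, G.r (ed k) = w (k + 1)) (hper : ∀ k, w (k + ℓ) = w k)
    (hinj : ∀ k k', k < ℓ → k' < ℓ → w k = w k' → k = k') (k : ℕ) {i i' : ℤ}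
    (h : G.tgen (w k) i = G.tgen (w k) i') : (ℓ : ℤ) ∣ i - i' := by
  obtain ⟨F, h1, h2⟩ := G.tcon_iff_join.1 (G.mk_eq_iff.1 h)
  obtain ⟨t, rfl⟩ := w_reach w ed hemit hr k i h1
  obtain ⟨u, hu⟩ := w_reach w ed hemit hr k i' h2
  have hp := Multiset.singleton_inj.1 hu
  have hv : w (k + t) = w (k + u) := congrArg Prod.fst hp
  have hii : i + (t : ℤ) = i' + u := congrArg Prod.snd hp
  have hmod : (k + t) % ℓ = (k + u) % ℓ :=
    w_eq_mod w ℓ hℓ hper hinj hv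
  have hdvd : (ℓ : ℤ) ∣ (u : ℤ) - t := (Nat.ModEq.add_left_cancel' k hmod).dvd
  have heq : i - i' = (u : ℤ) - t := by omega
  rwa [heq]

lemma w_tgen_period_nat (hemit : ∀ k, G.emit (w k) = {ed k})
    (hr : ∀ k, G.r (ed k) = w (k + 1)) (hper : ∀ k, w (k + ℓ) = w k) (k : ℕ) (c : ℕ) :
    ∀ i : ℤ, G.tgen (w k) i = G.tgen (w k) (i + c * ℓ) := by
  induction c with
  | zero => intro i; simp
  | succ c ih =>
    intro i
    have h1 : G.tgen (w k) i = G.tgen (w k) (i + ℓ) := by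
      have := w_tgen_eq w ed hemit hr k ℓ i
      rwa [hper k] at this
    rw [h1, ih (i + ℓ)]
    congr 1
    push_cast
    ring

lemma w_tgen_period (hemit : ∀ k, G.emit (w k) = {ed k})
    (hr : ∀ k, G.r (ed k) = w (k + 1)) (hper : ∀ k, w (k + ℓ) = w k) (k : ℕ) {i d : ℤ}
    (hd : (ℓ : ℤ) ∣ d) : G.tgen (w k) i = G.tgen (w k) (i + d) := by
  obtain ⟨c, rfl⟩ := hd
  rcases le_or_gt 0 c with hc | hc
  · have hcc : ((c.toNat : ℕ) : ℤ) = c := Int.toNat_of_nonneg hc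
    have := w_tgen_period_nat w ed ℓ hemit hr hper k c.toNat i
    rw [this]
    congr 1
    push_cast
    rw [hcc]
    ring
  · have hcc : (((-c).toNat : ℕ) : ℤ) = -c := Int.toNat_of_nonneg (by omega)
    have := w_tgen_period_nat w ed ℓ hemit hr hper k (-c).toNat (i + ℓ * c)
    rw [this]
    congr 1
    push_cast
    rw [hcc]
    ring

lemma w_tmin (hemit : ∀ k, G.emit (w k) = {ed k}) (hr : ∀ k, G.r (ed k) = w (k + 1))
    (k : ℕ) (i : ℤ) : G.TMin (G.tgen (w k) i) := by
  intro b hb hle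
  obtain ⟨c, hc⟩ := hle
  obtain ⟨B, rfl⟩ := G.exists_rep b
  obtain ⟨C, rfl⟩ := G.exists_rep c
  have hc' : G.tcon.mk' {(w k, i)} = G.tcon.mk' (B + C) := by
    rw [map_add]; exact hc
  obtain ⟨F, h1, h2⟩ := G.tcon_iff_join.1 (G.mk_eq_iff.1 hc')
  obtain ⟨t, rfl⟩ := w_reach w ed hemit hr k i h1
  obtain ⟨FB, FC, hF, hB2, hC2⟩ := G.trt_split h2
  have hBne : B ≠ 0 := fun h0 => hb (by rw [h0, map_zero]; rfl)
  have hcardB : 0 < Multiset.card FB := lt_of_lt_of_le (Multiset.card_pos.2 hBne) (G.trt_card_le hB2)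
  have hcard : Multiset.card FB + Multiset.card FC = 1 := by
    rw [← Multiset.card_add, ← hF]; simp
  have hFC : FC = 0 := Multiset.card_eq_zero.1 (by omega)
  have hC0 : C = 0 := G.trt_zero_right (hFC ▸ hC2)
  refine ⟨0, ?_⟩
  rw [add_zero, hc, hC0, map_zero]; exact (add_zero _).symm

lemma w_card (hℓ : 0 < ℓ) (hemit : ∀ k, G.emit (w k) = {ed k})
    (hr : ∀ k, G.r (ed k) = w (k + 1)) (hper : ∀ k, w (k + ℓ) = w k)
    (hinj : ∀ k k', k < ℓ → k' < ℓ → w k = w k' → k = k') (k : ℕ) :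
    Nat.card ↥(Set.range fun n : ℤ => G.tshift n (G.tgen (w k) 0)) = ℓ := by
  haveI : NeZero ℓ := NeZero.of_pos hℓ
  set X := G.tgen (w k) 0 with hX
  have htg : ∀ n : ℤ, G.tshift n X = G.tgen (w k) n := fun n => by
    rw [hX, G.tshift_tgen, zero_add]
  let g : ZMod ℓ → ↥(Set.range fun n : ℤ => G.tshift n X) :=
    fun z => ⟨G.tshift (z.val : ℤ) X, ⟨(z.val : ℤ), rfl⟩⟩
  have hbij : Function.Bijective g := by
    constructor
    · intro z z' hzz
      have h1 : G.tgen (w k) (z.val : ℤ) = G.tgen (w k) (z'.val : ℤ) := by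
        rw [← htg, ← htg]
        exact congrArg Subtype.val hzz
      have h2 := w_tgen_dvd w ed ℓ hℓ hemit hr hper hinj k h1
      have h3 : ((z.val : ℤ) - z'.val) = 0 :=
        Int.eq_zero_of_abs_lt_dvd h2 (by
          have := ZMod.val_lt z
          have := ZMod.val_lt z'
          rw [abs_lt]
          constructor <;> [skip; skip] <;> push_cast <;> omega)
      have h4 : z.val = z'.val := by omega
      exact ZMod.val_injective ℓ h4
    · rintro ⟨y, n, rfl⟩
      refine ⟨(n : ZMod ℓ), Subtype.ext ?_⟩
      show G.tshift _ X = G.tshift n X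
      rw [htg, htg]
      have hval : (((n : ZMod ℓ).val : ℤ)) = n % ℓ := ZMod.val_intCast n
      have hdvd : (ℓ : ℤ) ∣ n - ((n : ZMod ℓ).val : ℤ) := by
        rw [hval]
        exact ⟨n / ℓ, by have := Int.mul_ediv_add_emod n ℓ; linarith⟩
      have := w_tgen_period w ed ℓ hemit hr hper k (i := ((n : ZMod ℓ).val : ℤ)) hdvd
      rw [this]
      congr 1
      ring
  rw [← Nat.card_eq_of_bijective g hbij, Nat.card_zmod]

lemma w_orbit_eq (hℓ : 0 < ℓ) (hemit : ∀ k, G.emit (w k) = {ed k})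
    (hr : ∀ k, G.r (ed k) = w (k + 1)) (hper : ∀ k, w (k + ℓ) = w k) (k k' : ℕ) :
    (Set.range fun n : ℤ => G.tshift n (G.tgen (w k) 0)) =
      Set.range fun n : ℤ => G.tshift n (G.tgen (w k') 0) := by
  set t₀ := k' + (ℓ - k % ℓ) with ht₀
  have hmad := Nat.mod_add_div k ℓ
  have hmlt := Nat.mod_lt k hℓ
  have hkk : k + t₀ = (k' + ℓ * (k / ℓ)) + ℓ := by omega
  have hw : w (k + t₀) = w k' := by
    rw [hkk, hper, w_mul w ℓ hper]
  have h1 : G.tgen (w k) 0 = G.tgen (w k') (t₀ : ℤ) := by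
    have := w_tgen_eq w ed hemit hr k t₀ 0
    rwa [hw, zero_add] at this
  have h2 : G.tgen (w k) 0 = G.tshift (t₀ : ℤ) (G.tgen (w k') 0) := by
    rw [G.tshift_tgen, zero_add]; exact h1
  rw [h2, G.orbit_shift]

lemma w_orbit_set (p : List Ed) (hℓp : 0 < ℓ) (hper : ∀ k, w (k + ℓ) = w k)
    (hemit : ∀ k, G.emit (w k) = {ed k}) (hr : ∀ k, G.r (ed k) = w (k + 1))
    (hchar : ∀ x, x ∈ G.cycVerts p ↔ ∃ k, k < ℓ ∧ w k = x) (k₀ : ℕ) :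
    G.cycVerts p = {y | ∃ t : ℕ, (G.succ)^[t] (w k₀) = y} := by
  ext y
  rw [hchar]
  constructor
  · rintro ⟨j, hj, rfl⟩
    set t₀ := j + (ℓ - k₀ % ℓ) with ht₀
    have hmad := Nat.mod_add_div k₀ ℓ
    have hmlt := Nat.mod_lt k₀ hℓp
    have hkk : k₀ + t₀ = (j + ℓ * (k₀ / ℓ)) + ℓ := by omega
    refine ⟨t₀, ?_⟩
    rw [w_iter w ed hemit hr, hkk, hper, w_mul w ℓ hper]
  · rintro ⟨t, rfl⟩
    rw [w_iter w ed hemit hr]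
    exact ⟨(k₀ + t) % ℓ, Nat.mod_lt _ hℓp, (w_mod w ℓ hℓp hper _).symm⟩

end machine

lemma trt_sink {x : V} (hx : G.emit x = ∅) (j : ℤ) {K : Multiset (V × ℤ)}
    (h : G.TRT {(x, j)} K) : K = {(x, j)} := by
  induction h with
  | refl => rfl
  | tail h1 h2 ih =>
    rw [ih] at h2
    obtain ⟨v, i, hv, hne, _⟩ := h2
    have hvx : v = x := congrArg Prod.fst (Multiset.mem_singleton.1 hv)
    rw [hvx] at hne
    exact absurd hx hne

lemma min_periodic_classify (a : G.TM) (ha : a ≠ 0) (hmin : G.TMin a)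
    (n : ℤ) (hn : n ≠ 0) (hper : G.tshift n a = a) :
    ∃ (p : List Ed) (e : Ed) (m : ℤ), G.IsCycle p ∧ G.NoExit p ∧ e ∈ p ∧
      a = G.tshift m (G.tgen (G.s e) 0) := by
  classical
  obtain ⟨A, rfl⟩ := G.exists_rep a
  have hA0 : A ≠ 0 := fun h => ha (by rw [h, map_zero]; rfl)
  -- every element of a reachable multiset: `a ≤ tgen q`
  have hle : ∀ D, G.TRT A D → ∀ q : V × ℤ, q ∈ D →
      ∃ C, G.tcon.mk' {q} = G.tcon.mk' (A + C) := by
    intro D hD q hq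
    have hDa : G.tcon.mk' A = G.tcon.mk' D := G.trt_mk_eq hD
    have hsplit : G.tcon.mk' D = G.tcon.mk' {q} + G.tcon.mk' (D.erase q) := by
      rw [← map_add]
      congr 1
      rw [Multiset.singleton_add, Multiset.cons_erase hq]
    have h1 : algLE (G.tcon.mk' {q}) (G.tcon.mk' A) := ⟨_, by rw [hDa, hsplit]⟩
    have h2 := hmin _ (fun h0 => by
        have := G.mk_eq_zero_iff.1 h0
        simp at this) h1
    obtain ⟨c, hc⟩ := h2
    obtain ⟨C, rfl⟩ := G.exists_rep c
    exact ⟨C, by rw [hc, map_add]; rfl⟩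
  -- no sinks are reachable
  have hgood : ∀ D, G.TRT A D → ∀ q : V × ℤ, q ∈ D →
      ∀ x, G.Reaches q.1 x → G.emit x ≠ ∅ := by
    intro D hD q hq x hreach hxemp
    obtain ⟨F, hF, t, htF⟩ := G.trt_of_reaches q.2 hreach
    have hD' : G.TRT A (D.erase q + F) := G.trt_elem_ctx hD hq hF
    have hx' : (x, q.2 + t) ∈ D.erase q + F := Multiset.mem_add.2 (Or.inr htF)
    obtain ⟨C, hC⟩ := hle _ hD' _ hx'
    obtain ⟨H, h1, h2⟩ := G.tcon_iff_join.1 (G.mk_eq_iff.1 hC)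
    have hH := G.trt_sink hxemp _ h1
    rw [hH] at h2
    obtain ⟨HA, HC, hsum, hA2, hC2⟩ := G.trt_split h2
    have hcA : 0 < Multiset.card HA :=
      lt_of_lt_of_le (Multiset.card_pos.2 hA0) (G.trt_card_le hA2)
    have hsum1 : Multiset.card HA + Multiset.card HC = 1 := by
      rw [← Multiset.card_add, ← hsum]; simp
    have hHC : HC = 0 := Multiset.card_eq_zero.1 (by omega)
    rw [hHC, add_zero] at hsum
    have hA3 : G.TRT A {(x, q.2 + (t : ℤ))} := hsum ▸ hA2
    -- periodicity contradiction
    have hshift : G.TRT (shiftMul n A) {(x, q.2 + (t : ℤ) + n)} := by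
      have hs := G.trt_shift n hA3
      have heq : shiftMul n ({(x, q.2 + (t : ℤ))} : Multiset (V × ℤ)) = {(x, q.2 + t + n)} := rfl
      rwa [heq] at hs
    have hpereq : G.tcon.mk' (shiftMul n A) = G.tcon.mk' A := by
      rw [← G.tshift_mk]; exact hper
    obtain ⟨K, k1, k2⟩ := G.tcon_iff_join.1 (G.mk_eq_iff.1 hpereq)
    obtain ⟨L1, l1a, l1b⟩ := G.trt_join k1 hshift
    have hL1 := G.trt_sink hxemp _ l1b
    rw [hL1] at l1a
    obtain ⟨L2, l2a, l2b⟩ := G.trt_join k2 hA3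
    have hL2 := G.trt_sink hxemp _ l2b
    rw [hL2] at l2a
    obtain ⟨L3, l3a, l3b⟩ := G.trt_join l1a l2a
    have e1 := G.trt_sink hxemp _ l3a
    have e2 := G.trt_sink hxemp _ l3b
    rw [e1] at e2
    have := congrArg Prod.snd (Multiset.singleton_inj.1 e2)
    simp only at this
    omega
  -- every reachable vertex has out-degree exactly one
  have hout : ∀ D, G.TRT A D → ∀ q : V × ℤ, q ∈ D → ∃ e, G.emit q.1 = {e} := by
    intro D hD q hq
    have hne : G.emit q.1 ≠ ∅ := hgood D hD q hq q.1 Relation.ReflTransGen.refl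
    rcases Nat.lt_or_ge (G.emit q.1).card 2 with hlt | hge
    · have hcard1 : (G.emit q.1).card = 1 := by
        have := Finset.card_pos.2 (Finset.nonempty_iff_ne_empty.2 hne); omega
      exact Finset.card_eq_one.1 hcard1
    · exfalso
      obtain ⟨v, i⟩ := q
      obtain ⟨e₁, he₁, e₂, he₂, hee⟩ := Finset.one_lt_card.1 hge
      have hstep : G.TStep1 D (D.erase (v, i) + (G.emit v).val.map (fun e => (G.r e, i + 1))) :=
        ⟨v, i, hq, hne, rfl⟩
      set Dt := D.erase (v, i) + (G.emit v).val.map (fun e => (G.r e, i + 1)) with hDt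
      have hRDt : G.TRT A Dt := hD.tail hstep
      have hmem1 : ((G.r e₁ : V), (i + 1 : ℤ)) ∈ Dt :=
        Multiset.mem_add.2 (Or.inr (Multiset.mem_map.2 ⟨e₁, Finset.mem_def.1 he₁, rfl⟩))
      have hmem2 : ((G.r e₂ : V), (i + 1 : ℤ)) ∈ Dt :=
        Multiset.mem_add.2 (Or.inr (Multiset.mem_map.2 ⟨e₂, Finset.mem_def.1 he₂, rfl⟩))
      obtain ⟨C, hC⟩ := hle _ hRDt _ hmem1
      obtain ⟨H, h1, h2⟩ := G.tcon_iff_join.1 (G.mk_eq_iff.1 hC)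
      have hDtC : G.TRT (A + C) (Dt + C) := G.trt_add hRDt Relation.ReflTransGen.refl
      obtain ⟨K, hHK, hDCK⟩ := G.trt_join h2 hDtC
      have h1K : G.TRT {(G.r e₁, i + 1)} K := h1.trans hHK
      obtain ⟨m, hm⟩ := exists_level_bound K
      obtain ⟨hcw1, _⟩ := G.trt_cw h1K hm
      obtain ⟨hcw2, hlev⟩ := G.trt_cw hDCK hm
      have hi1 : i + 1 ≤ m := hlev _ (Multiset.mem_add.2 (Or.inl hmem1))
      have hg2 : ∀ x, G.Reaches (G.r e₂) x → G.emit x ≠ ∅ :=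
        fun x hx => hgood _ hRDt _ hmem2 x hx
      have hP2 : 1 ≤ G.Pn (m - (i + 1)).toNat (G.r e₂) := G.Pn_pos hg2 _
      have hsing : G.cw m {(G.r e₁, i + 1)} = G.Pn (m - (i + 1)).toNat (G.r e₁) := by
        rw [G.cw_singleton, if_pos hi1]
      have hdec : G.cw m (Dt + C) = G.cw m (D.erase (v, i))
          + G.cw m ((G.emit v).val.map (fun e => (G.r e, i + 1))) + G.cw m C := by
        rw [G.cw_add, G.cw_add]
      have hmap : G.cw m ((G.emit v).val.map (fun e => (G.r e, i + 1)))
          = ∑ e ∈ G.emit v, (if (i + 1 : ℤ) ≤ m then G.Pn (m - (i + 1)).toNat (G.r e) else 0) := by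
        rw [cw, Multiset.map_map]
        rfl
      have hpair : G.Pn (m - (i + 1)).toNat (G.r e₁) + G.Pn (m - (i + 1)).toNat (G.r e₂)
          ≤ ∑ e ∈ G.emit v, (if (i + 1 : ℤ) ≤ m then G.Pn (m - (i + 1)).toNat (G.r e) else 0) := by
        have hsub : ({e₁, e₂} : Finset Ed) ⊆ G.emit v := by
          intro e he
          rcases Finset.mem_insert.1 he with rfl | he
          · exact he₁
          · exact Finset.mem_singleton.1 he ▸ he₂
        calc G.Pn (m - (i + 1)).toNat (G.r e₁) + G.Pn (m - (i + 1)).toNat (G.r e₂)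
            = ∑ e ∈ ({e₁, e₂} : Finset Ed),
              (if (i + 1 : ℤ) ≤ m then G.Pn (m - (i + 1)).toNat (G.r e) else 0) := by
              rw [Finset.sum_pair hee, if_pos hi1, if_pos hi1]
          _ ≤ _ := Finset.sum_le_sum_of_subset hsub
      rw [hsing] at hcw1
      rw [hdec, ← hmap.symm] at hcw2
      omega
  -- the linear case: pick an element of `A`
  obtain ⟨q0, hvA⟩ := Multiset.exists_mem_of_ne_zero hA0
  obtain ⟨v, i⟩ := q0
  obtain ⟨C, hC⟩ := hle A Relation.ReflTransGen.refl _ hvA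
  obtain ⟨H, h1, h2⟩ := G.tcon_iff_join.1 (G.mk_eq_iff.1 hC)
  have hitD : ∀ t : ℕ, ∃ D, G.TRT A D ∧ ((G.succ)^[t] v, i + (t : ℤ)) ∈ D := by
    intro t
    induction t with
    | zero => exact ⟨A, Relation.ReflTransGen.refl, by simpa using hvA⟩
    | succ t ih =>
      obtain ⟨D, hD, hmem⟩ := ih
      obtain ⟨e, he⟩ := hout D hD _ hmem
      have hstep := G.tstep1_uniq he (i + t)
      refine ⟨D.erase ((G.succ)^[t] v, i + (t : ℤ)) + {(G.succ ((G.succ)^[t] v), i + t + 1)},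
        G.trt_elem_ctx hD hmem (Relation.ReflTransGen.single hstep),
        Multiset.mem_add.2 (Or.inr (Multiset.mem_singleton.2 ?_))⟩
      rw [Function.iterate_succ_apply']
      congr 1
      push_cast
      ring
  have hit : ∀ t : ℕ, ∃ e, G.emit ((G.succ)^[t] v) = {e} := fun t => by
    obtain ⟨D, hD, hmem⟩ := hitD t
    exact hout D hD _ hmem
  obtain ⟨t, rfl⟩ := G.trt_singleton_eq hit i h1
  obtain ⟨HA, HC, hsum, hA2, hC2⟩ := G.trt_split h2
  have hcA : 0 < Multiset.card HA :=
    lt_of_lt_of_le (Multiset.card_pos.2 hA0) (G.trt_card_le hA2)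
  have hsum1 : Multiset.card HA + Multiset.card HC = 1 := by
    rw [← Multiset.card_add, ← hsum]; simp
  have hHC : HC = 0 := Multiset.card_eq_zero.1 (by omega)
  rw [hHC, add_zero] at hsum
  have hA3 : G.TRT A {((G.succ)^[t] v, i + (t : ℤ))} := hsum ▸ hA2
  set y := (G.succ)^[t] v with hy
  set m₀ : ℤ := i + t with hm₀
  have hay : G.tcon.mk' A = G.tgen y m₀ := G.trt_mk_eq hA3
  have hity : ∀ u : ℕ, ∃ e, G.emit ((G.succ)^[u] y) = {e} := fun u => by
    rw [hy, ← Function.iterate_add_apply]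
    exact hit (u + t)
  have hpereq : G.tgen y (m₀ + n) = G.tgen y m₀ := by
    calc G.tgen y (m₀ + n) = G.tshift n (G.tgen y m₀) := (G.tshift_tgen n y m₀).symm
      _ = G.tshift n (G.tcon.mk' A) := by rw [hay]
      _ = (show G.TM from G.tcon.mk' A) := hper
      _ = G.tgen y m₀ := hay
  obtain ⟨M, hM1, hM2⟩ := G.tcon_iff_join.1 (G.mk_eq_iff.1 hpereq)
  obtain ⟨t₁, rfl⟩ := G.trt_singleton_eq hity (m₀ + n) hM1
  obtain ⟨t₂, ht₂⟩ := G.trt_singleton_eq hity m₀ hM2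
  have hpp := Multiset.singleton_inj.1 ht₂
  have hveq : (G.succ)^[t₁] y = (G.succ)^[t₂] y := congrArg Prod.fst hpp
  have hieq : m₀ + n + (t₁ : ℤ) = m₀ + t₂ := congrArg Prod.snd hpp
  have ht12 : t₁ ≠ t₂ := fun h => hn (by omega)
  obtain ⟨tz, d, hd0, hzper⟩ : ∃ tz d, 0 < d ∧
      (G.succ)^[d] ((G.succ)^[tz] y) = (G.succ)^[tz] y := by
    rcases Nat.lt_or_ge t₁ t₂ with hlt | hge
    · refine ⟨t₁, t₂ - t₁, by omega, ?_⟩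
      rw [← Function.iterate_add_apply]
      have hh : t₂ - t₁ + t₁ = t₂ := by omega
      rw [hh, ← hveq]
    · have hlt : t₂ < t₁ := by omega
      refine ⟨t₂, t₁ - t₂, by omega, ?_⟩
      rw [← Function.iterate_add_apply]
      have hh : t₁ - t₂ + t₂ = t₁ := by omega
      rw [hh, hveq]
  set z := (G.succ)^[tz] y with hz
  have hitz : ∀ u : ℕ, ∃ e, G.emit ((G.succ)^[u] z) = {e} := fun u => by
    rw [hz, ← Function.iterate_add_apply]
    exact hity (u + tz)
  have hex : ∃ d', 0 < d' ∧ (G.succ)^[d'] z = z := ⟨d, hd0, hzper⟩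
  set d₀ := Nat.find hex with hd₀
  obtain ⟨hd₀pos, hd₀per⟩ := Nat.find_spec hex
  set ed : ℕ → Ed := fun k => (hitz k).choose with hed
  have hedspec : ∀ k, G.emit ((G.succ)^[k] z) = {ed k} := fun k => (hitz k).choose_spec
  have hs_ed : ∀ k, G.s (ed k) = (G.succ)^[k] z := fun k =>
    (G.mem_emit _ _).1 (by rw [hedspec k]; exact Finset.mem_singleton_self _)
  have hr_ed : ∀ k, G.r (ed k) = (G.succ)^[k + 1] z := fun k => by
    rw [Function.iterate_succ_apply', ← G.succ_eq (hedspec k)]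
  set p := (List.range d₀).map ed with hp
  have hplen : p.length = d₀ := by simp [hp]
  have hppos : 0 < p.length := by rw [hplen]; exact hd₀pos
  have hpne : p ≠ [] := List.length_pos_iff.1 hppos
  have hget : ∀ (j : ℕ) (hj : j < p.length), p.get ⟨j, hj⟩ = ed j := by
    intro j hj
    simp [hp, List.getElem_map, List.getElem_range]
  have hkey : ∀ x₁ y₁ : ℕ, x₁ < y₁ → y₁ < d₀ → (G.succ)^[x₁] z = (G.succ)^[y₁] z → False := by
    intro x₁ y₁ hxy hyd heq
    have e1 : (G.succ)^[d₀ - y₁] ((G.succ)^[y₁] z) = z := by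
      rw [← Function.iterate_add_apply]
      have hh : d₀ - y₁ + y₁ = d₀ := by omega
      rw [hh, hd₀per]
    rw [← heq, ← Function.iterate_add_apply] at e1
    have hlt : d₀ - y₁ + x₁ < d₀ := by omega
    have hpos : 0 < d₀ - y₁ + x₁ := by omega
    exact Nat.find_min hex hlt ⟨hpos, e1⟩
  have hcyc : G.IsCycle p := by
    refine ⟨hpne, ?_, ?_, ?_⟩
    · apply List.isChain_iff_getElem.2
      intro j hj
      show G.r (p.get ⟨j, by omega⟩) = G.s (p.get ⟨j + 1, hj⟩)
      rw [hget, hget, hr_ed, hs_ed]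
    · have h1 : p.getLast hpne = ed (p.length - 1) := by
        rw [List.getLast_eq_getElem]
        exact hget _ _
      have h2 : p.head hpne = ed 0 := by
        have h3 := hget 0 hppos
        rw [List.get_eq_getElem] at h3
        rw [List.head_eq_getElem]
        exact h3
      rw [h1, h2, hr_ed, hs_ed, hplen]
      have hh : d₀ - 1 + 1 = d₀ := by omega
      rw [hh, hd₀per]
      simp
    · have hmapmap : p.map G.s = (List.range d₀).map (fun k => (G.succ)^[k] z) := by
        rw [hp, List.map_map]
        apply List.map_congr_left
        intro k _
        exact hs_ed k
      rw [hmapmap]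
      refine List.Nodup.map_on ?_ List.nodup_range
      intro x₁ hx₁ y₁ hy₁ hxy
      by_contra hne'
      rcases Nat.lt_or_ge x₁ y₁ with h | h
      · exact hkey x₁ y₁ h (List.mem_range.1 hy₁) hxy
      · exact hkey y₁ x₁ (by omega) (List.mem_range.1 hx₁) hxy.symm
  have hnx : G.NoExit p := by
    intro e he
    obtain ⟨k, _, rfl⟩ := List.mem_map.1 he
    rw [hs_ed k]
    exact hedspec k
  refine ⟨p, ed 0, m₀ + tz, hcyc, hnx, ?_, ?_⟩
  · exact List.mem_map.2 ⟨0, List.mem_range.2 hd₀pos, rfl⟩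
  · have h5 : G.tgen y m₀ = G.tgen z (m₀ + tz) := by
      have h6 := G.trt_mk_eq (G.trt_iterate hity m₀ tz)
      exact h6
    rw [G.tshift_tgen, zero_add, hs_ed 0]
    simp only [Function.iterate_zero, id_eq]
    rw [hay, h5]

lemma cycle_facts (p : List Ed) (hc : G.IsCycle p) (hx : G.NoExit p) :
    ∀ v ∈ G.cycVerts p,
      G.TMin (G.tgen v 0) ∧ G.tshift (p.length : ℤ) (G.tgen v 0) = G.tgen v 0 ∧
      Nat.card ↥(Set.range fun n : ℤ => G.tshift n (G.tgen v 0)) = p.length ∧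
      ∀ v' ∈ G.cycVerts p,
        (Set.range fun n : ℤ => G.tshift n (G.tgen v 0)) =
          Set.range fun n : ℤ => G.tshift n (G.tgen v' 0) := by
  obtain ⟨w, ed, hemit, hr, hper, hinj, hchar⟩ := G.cycle_machine p hc hx
  have hℓ : 0 < p.length := List.length_pos_iff.2 hc.choose
  intro v hv
  obtain ⟨k, hk, rfl⟩ := (hchar v).1 hv
  refine ⟨w_tmin w ed hemit hr k 0, ?_,
    w_card w ed p.length hℓ hemit hr hper hinj k, ?_⟩
  · rw [G.tshift_tgen, zero_add]
    have := w_tgen_period w ed p.length hemit hr hper k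
      (i := (0 : ℤ)) (d := (p.length : ℤ)) ⟨1, by ring⟩
    rw [zero_add] at this
    exact this.symm
  · intro v' hv'
    obtain ⟨k', hk', rfl⟩ := (hchar v').1 hv'
    exact w_orbit_eq w ed p.length hℓ hemit hr hper k k'

lemma cycle_orbit_inj (p q : List Ed) (hcp : G.IsCycle p) (hxp : G.NoExit p)
    (hcq : G.IsCycle q) (hxq : G.NoExit q) {v v' : V} (hv : v ∈ G.cycVerts p)
    (hv' : v' ∈ G.cycVerts q)
    (h : (Set.range fun n : ℤ => G.tshift n (G.tgen v 0)) =
      Set.range fun n : ℤ => G.tshift n (G.tgen v' 0)) :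
    G.cycVerts p = G.cycVerts q := by
  obtain ⟨w, ed, hemit, hr, hper, hinj, hchar⟩ := G.cycle_machine p hcp hxp
  obtain ⟨w', ed', hemit', hr', hper', hinj', hchar'⟩ := G.cycle_machine q hcq hxq
  have hℓp : 0 < p.length := List.length_pos_iff.2 hcp.choose
  have hℓq : 0 < q.length := List.length_pos_iff.2 hcq.choose
  obtain ⟨k, hk, rfl⟩ := (hchar v).1 hv
  obtain ⟨k', hk', rfl⟩ := (hchar' v').1 hv'
  have hmem : G.tgen (w k) 0 ∈ Set.range fun n : ℤ => G.tshift n (G.tgen (w' k') 0) := by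
    rw [← h]
    exact ⟨0, G.tshift_zero_apply _⟩
  obtain ⟨m, hm⟩ := hmem
  have hm' : G.tgen (w' k') m = G.tgen (w k) 0 := by
    have h0 := G.tshift_tgen m (w' k') 0
    rw [zero_add] at h0
    rw [← h0]
    exact hm
  obtain ⟨F, h1, h2⟩ := G.tcon_iff_join.1 (G.mk_eq_iff.1 hm'.symm)
  obtain ⟨t, rfl⟩ := w_reach w ed hemit hr k 0 h1
  obtain ⟨u, hu⟩ := w_reach w' ed' hemit' hr' k' m h2
  have hxx : w (k + t) = w' (k' + u) := congrArg Prod.fst (Multiset.singleton_inj.1 hu)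
  have hset1 := w_orbit_set w ed p.length p hℓp hper hemit hr hchar (k + t)
  have hset2 := w_orbit_set w' ed' q.length q hℓq hper' hemit' hr' hchar' (k' + u)
  rw [hset1, hset2, hxx]

/-- A canonical vertex on (the chosen cycle for) an element of the cycle-class subtype. -/
noncomputable def cycVert
    (x : {S : Set V // ∃ p : List Ed, G.IsCycle p ∧ G.NoExit p ∧ S = G.cycVerts p}) : V :=
  G.s ((x.2.choose).head x.2.choose_spec.1.choose)

lemma cycVert_mem
    (x : {S : Set V // ∃ p : List Ed, G.IsCycle p ∧ G.NoExit p ∧ S = G.cycVerts p}) :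
    G.cycVert x ∈ G.cycVerts x.2.choose :=
  ⟨_, List.head_mem _, rfl⟩

lemma cycVert_props
    (x : {S : Set V // ∃ p : List Ed, G.IsCycle p ∧ G.NoExit p ∧ S = G.cycVerts p}) :
    G.tgen (G.cycVert x) 0 ≠ 0 ∧ G.TMin (G.tgen (G.cycVert x) 0) ∧
      ∃ n : ℤ, n ≠ 0 ∧ G.tshift n (G.tgen (G.cycVert x) 0) = G.tgen (G.cycVert x) 0 := by
  obtain ⟨hc, hx, hS⟩ := x.2.choose_spec
  obtain ⟨h1, h2, h3, h4⟩ := G.cycle_facts _ hc hx _ (G.cycVert_mem x)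
  refine ⟨G.tgen_ne_zero _ _, h1, ⟨(x.2.choose.length : ℤ), ?_, h2⟩⟩
  exact_mod_cast (List.length_pos_iff.2 hc.choose).ne'

end RFGraph

/-- There is a bijection between cycles without exits in `E` (identified by their vertex
sets) and orbits of minimal periodic elements of `M_E^{gr}`, sending a cycle to the orbit
of any of its vertices; the length of the cycle equals the cardinality of the orbit. -/
theorem cycles_no_exit_bij_orbits {V Ed : Type} [DecidableEq V] (G : RFGraph V Ed) :
    ∃ f : {S : Set V // ∃ p : List Ed, G.IsCycle p ∧ G.NoExit p ∧ S = G.cycVerts p} →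
        {T : Set G.TM // ∃ a : G.TM, a ≠ 0 ∧ G.TMin a ∧
          (∃ n : ℤ, n ≠ 0 ∧ G.tshift n a = a) ∧
          T = Set.range fun n : ℤ => G.tshift n a},
      Function.Bijective f ∧
      (∀ (p : List Ed) (hp : G.IsCycle p) (hne : G.NoExit p) (e : Ed), e ∈ p →
        (f ⟨G.cycVerts p, p, hp, hne, rfl⟩ : Set G.TM) =
          Set.range fun n : ℤ => G.tshift n (G.tgen (G.s e) 0)) ∧
      (∀ (p : List Ed) (hp : G.IsCycle p) (hne : G.NoExit p),
        Nat.card (f ⟨G.cycVerts p, p, hp, hne, rfl⟩ : Set G.TM) = p.length) := by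
  classical
  refine ⟨fun x => ⟨Set.range fun n : ℤ => G.tshift n (G.tgen (G.cycVert x) 0),
    G.tgen (G.cycVert x) 0, (G.cycVert_props x).1, (G.cycVert_props x).2.1,
    (G.cycVert_props x).2.2, rfl⟩, ⟨?_, ?_⟩, ?_, ?_⟩
  · -- injectivity
    intro x y hxy
    have hval : (Set.range fun n : ℤ => G.tshift n (G.tgen (G.cycVert x) 0)) =
        Set.range fun n : ℤ => G.tshift n (G.tgen (G.cycVert y) 0) :=
      congrArg Subtype.val hxy
    obtain ⟨hcx, hxx, hSx⟩ := x.2.choose_spec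
    obtain ⟨hcy, hxy', hSy⟩ := y.2.choose_spec
    have hinj := G.cycle_orbit_inj _ _ hcx hxx hcy hxy'
      (G.cycVert_mem x) (G.cycVert_mem y) hval
    exact Subtype.ext (hSx.trans (hinj.trans hSy.symm))
  · -- surjectivity
    rintro ⟨T, aT, ha0, hamin, ⟨nn, hnn, hpereq⟩, rfl⟩
    obtain ⟨p, e, m, hc, hx, hep, haeq⟩ :=
      G.min_periodic_classify aT ha0 hamin nn hnn hpereq
    refine ⟨⟨G.cycVerts p, p, hc, hx, rfl⟩, Subtype.ext ?_⟩
    set x : {S : Set V // ∃ p : List Ed, G.IsCycle p ∧ G.NoExit p ∧ S = G.cycVerts p} :=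
      ⟨G.cycVerts p, p, hc, hx, rfl⟩ with hxdef
    show (Set.range fun n : ℤ => G.tshift n (G.tgen (G.cycVert x) 0)) =
      Set.range fun n : ℤ => G.tshift n aT
    obtain ⟨hcx, hxx, hSx⟩ := x.2.choose_spec
    have hmx' : G.cycVert x ∈ G.cycVerts p := by
      have : G.cycVerts p = G.cycVerts x.2.choose := hSx
      rw [this]
      exact G.cycVert_mem x
    have hse : G.s e ∈ G.cycVerts p := ⟨e, hep, rfl⟩
    have horb := (G.cycle_facts p hc hx _ hmx').2.2.2 _ hse
    calc (Set.range fun n : ℤ => G.tshift n (G.tgen (G.cycVert x) 0))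
        = Set.range fun n : ℤ => G.tshift n (G.tgen (G.s e) 0) := horb
      _ = Set.range fun n : ℤ => G.tshift n (G.tshift m (G.tgen (G.s e) 0)) :=
          (G.orbit_shift m _).symm
      _ = Set.range fun n : ℤ => G.tshift n aT := by rw [← haeq]
  · -- the orbit is the orbit of any vertex of the cycle
    intro p hp hnx e he
    set x : {S : Set V // ∃ p : List Ed, G.IsCycle p ∧ G.NoExit p ∧ S = G.cycVerts p} :=
      ⟨G.cycVerts p, p, hp, hnx, rfl⟩ with hxdef
    show (Set.range fun n : ℤ => G.tshift n (G.tgen (G.cycVert x) 0)) =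
      Set.range fun n : ℤ => G.tshift n (G.tgen (G.s e) 0)
    obtain ⟨hcx, hxx, hSx⟩ := x.2.choose_spec
    have hmx' : G.cycVert x ∈ G.cycVerts p := by
      have : G.cycVerts p = G.cycVerts x.2.choose := hSx
      rw [this]
      exact G.cycVert_mem x
    exact (G.cycle_facts p hp hnx _ hmx').2.2.2 _ ⟨e, he, rfl⟩
  · -- cardinality
    intro p hp hnx
    set x : {S : Set V // ∃ p : List Ed, G.IsCycle p ∧ G.NoExit p ∧ S = G.cycVerts p} :=
      ⟨G.cycVerts p, p, hp, hnx, rfl⟩ with hxdef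
    show Nat.card ↥(Set.range fun n : ℤ => G.tshift n (G.tgen (G.cycVert x) 0)) = p.length
    obtain ⟨hcx, hxx, hSx⟩ := x.2.choose_spec
    have hmx' : G.cycVert x ∈ G.cycVerts p := by
      have : G.cycVerts p = G.cycVerts x.2.choose := hSx
      rw [this]
      exact G.cycVert_mem x
    exact (G.cycle_facts p hp hnx _ hmx').2.2.1
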